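/- Let A be a real n×d matrix and f(x) := ⟨exp(Ax), 1_n⟩^{-1} · exp(Ax). Then for each i, j ∈ [d], the second partial derivative of f satisfies ∂²f(x)/∂x_i ∂x_j = 2⟨f(x), A_{*,i}⟩⟨f(x), A_{*,j}⟩ f(x) − ⟨f(x), A_{*,i} ∘ A_{*,j}⟩ f(x) − ⟨f(x), A_{*,i}⟩ (f(x) ∘ A_{*,j}) − ⟨f(x), A_{*,j}⟩ (f(x) ∘ A_{*,i}) + A_{*,i} ∘ f(x) ∘ A_{*,j}. -/

import Mathlib

open Matrix

/-- The Euclidean inner product on ℝ^n. -/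
noncomputable def dotp {n : ℕ} (u v : Fin n → ℝ) : ℝ := ∑ i, u i * v i

/-- The softmax function f(x) = ⟨exp(Ax), 1_n⟩⁻¹ · exp(Ax). -/
noncomputable def softmaxFn {n d : ℕ} (A : Matrix (Fin n) (Fin d) ℝ) (x : Fin d → ℝ) :
    Fin n → ℝ :=
  (∑ i, Real.exp (A.mulVec x i))⁻¹ • fun i => Real.exp (A.mulVec x i)

noncomputable def smL {n d : ℕ} (A : Matrix (Fin n) (Fin d) ℝ) :
    (Fin d → ℝ) →L[ℝ] (Fin n → ℝ) :=
  LinearMap.toContinuousLinearMap A.mulVecLin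

lemma smL_apply {n d : ℕ} (A : Matrix (Fin n) (Fin d) ℝ) (y : Fin d → ℝ) :
    smL A y = A.mulVec y := by simp [smL]

noncomputable def smE' {n d : ℕ} (A : Matrix (Fin n) (Fin d) ℝ) (y : Fin d → ℝ) :
    (Fin d → ℝ) →L[ℝ] (Fin n → ℝ) :=
  ContinuousLinearMap.pi fun k =>
    Real.exp (A.mulVec y k) • ((ContinuousLinearMap.proj k).comp (smL A))

noncomputable def smS' {n d : ℕ} (A : Matrix (Fin n) (Fin d) ℝ) (y : Fin d → ℝ) :
    (Fin d → ℝ) →L[ℝ] ℝ :=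
  ∑ k, Real.exp (A.mulVec y k) • ((ContinuousLinearMap.proj k).comp (smL A))

noncomputable def smΦ {n d : ℕ} (A : Matrix (Fin n) (Fin d) ℝ) (y : Fin d → ℝ) :
    (Fin d → ℝ) →L[ℝ] (Fin n → ℝ) :=
  (∑ k, Real.exp (A.mulVec y k))⁻¹ • smE' A y +
    (-(((∑ k, Real.exp (A.mulVec y k)) ^ 2)⁻¹ • smS' A y)).smulRight
      (fun k => Real.exp (A.mulVec y k))

lemma smS_pos {n d : ℕ} (A : Matrix (Fin n) (Fin d) ℝ) (y : Fin d → ℝ) :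
    0 < ∑ k, Real.exp (A.mulVec y k) ∨ n = 0 := by
  rcases Nat.eq_zero_or_pos n with h | h
  · exact Or.inr h
  · have : Nonempty (Fin n) := ⟨⟨0, h⟩⟩
    exact Or.inl (Finset.sum_pos (fun k _ => Real.exp_pos _) Finset.univ_nonempty)

lemma smF_hasFDerivAt {n d : ℕ} (A : Matrix (Fin n) (Fin d) ℝ) (y : Fin d → ℝ)
    (hn : 0 < ∑ k, Real.exp (A.mulVec y k)) :
    HasFDerivAt (softmaxFn A) (smΦ A y) y := by
  have hE : HasFDerivAt (fun z => (fun k => Real.exp (A.mulVec z k))) (smE' A y) y := by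
    apply hasFDerivAt_pi''
    intro k
    have h1 : HasFDerivAt (fun z : Fin d → ℝ => A.mulVec z k)
        ((ContinuousLinearMap.proj k).comp (smL A)) y := by
      have := ((ContinuousLinearMap.proj k).comp (smL A)).hasFDerivAt (x := y)
      convert this using 1; funext z; simp [smL_apply]
    have := h1.exp
    simpa [smE', ContinuousLinearMap.proj_pi] using this
  have hS : HasFDerivAt (fun z => ∑ k, Real.exp (A.mulVec z k)) (smS' A y) y := by
    apply HasFDerivAt.fun_sum
    intro k _
    have h1 : HasFDerivAt (fun z : Fin d → ℝ => A.mulVec z k)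
        ((ContinuousLinearMap.proj k).comp (smL A)) y := by
      have := ((ContinuousLinearMap.proj k).comp (smL A)).hasFDerivAt (x := y)
      convert this using 1; funext z; simp [smL_apply]
    exact h1.exp
  have hinv : HasFDerivAt (fun z => (∑ k, Real.exp (A.mulVec z k))⁻¹)
      (-(((∑ k, Real.exp (A.mulVec y k)) ^ 2)⁻¹ • smS' A y)) y := by
    have := (hasDerivAt_inv (ne_of_gt hn)).comp_hasFDerivAt y hS
    simpa [Function.comp_def, neg_smul] using this
  have := hinv.smul hE
  simpa [softmaxFn, smΦ] using this


lemma smPhi_single {n d : ℕ} (A : Matrix (Fin n) (Fin d) ℝ) (y : Fin d → ℝ) (m : Fin d) :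
    smΦ A y (Pi.single m 1) =
      (softmaxFn A y * fun k => A k m) -
        (dotp (softmaxFn A y) (fun k => A k m)) • softmaxFn A y := by
  funext k
  have hs : (0:ℝ) < ∑ l, Real.exp (A.mulVec y l) :=
    Finset.sum_pos (fun l _ => Real.exp_pos _) ⟨k, Finset.mem_univ k⟩
  set s := ∑ l, Real.exp (A.mulVec y l) with hsdef
  have hs0 : s ≠ 0 := ne_of_gt hs
  simp only [smΦ, smE', smS', softmaxFn, dotp, ContinuousLinearMap.add_apply,
    ContinuousLinearMap.smul_apply, ContinuousLinearMap.pi_apply,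
    ContinuousLinearMap.smulRight_apply, ContinuousLinearMap.coe_sum',
    Finset.sum_apply, ContinuousLinearMap.coe_comp', Function.comp_apply,
    ContinuousLinearMap.proj_apply, smL, LinearMap.coe_toContinuousLinearMap',
    Matrix.mulVecLin_apply, Matrix.mulVec_single, MulOpposite.op_one, one_smul, Matrix.col_apply, mul_one, Pi.sub_apply,
    Pi.mul_apply, Pi.smul_apply, smul_eq_mul, Pi.add_apply, neg_smul,
    ContinuousLinearMap.neg_apply, Pi.neg_apply]
  have h1 : ∑ l, s⁻¹ * Real.exp (A.mulVec y l) * A l m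
      = s⁻¹ * ∑ l, Real.exp (A.mulVec y l) * A l m := by
    rw [Finset.mul_sum]; exact Finset.sum_congr rfl fun l _ => by ring
  rw [h1]
  rw [← hsdef]
  field_simp
  ring

noncomputable def mulCLM {n : ℕ} (a : Fin n → ℝ) : (Fin n → ℝ) →L[ℝ] (Fin n → ℝ) :=
  ContinuousLinearMap.pi fun k => (ContinuousLinearMap.proj k).smulRight (a k)

noncomputable def dotCLM {n : ℕ} (a : Fin n → ℝ) : (Fin n → ℝ) →L[ℝ] ℝ :=
  ∑ k, (ContinuousLinearMap.proj k).smulRight (a k)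

lemma mulCLM_apply {n : ℕ} (a u : Fin n → ℝ) : mulCLM a u = u * a := by
  funext k; simp [mulCLM]

lemma dotCLM_apply {n : ℕ} (a u : Fin n → ℝ) : dotCLM a u = dotp u a := by
  simp [dotCLM, dotp, ContinuousLinearMap.sum_apply]

/-- ∂²f(x)/∂x_i ∂x_j = 2⟨f,A_i⟩⟨f,A_j⟩ f − ⟨f, A_i ∘ A_j⟩ f − ⟨f,A_i⟩ (f ∘ A_j)
    − ⟨f,A_j⟩ (f ∘ A_i) + A_i ∘ f ∘ A_j. -/
theorem stmt_5 {n d : ℕ} (A : Matrix (Fin n) (Fin d) ℝ) (x : Fin d → ℝ) (i j : Fin d) :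
    fderiv ℝ (fun y => fderiv ℝ (softmaxFn A) y (Pi.single j 1)) x (Pi.single i 1) =
      (2 * dotp (softmaxFn A x) (fun k => A k i)
          * dotp (softmaxFn A x) (fun k => A k j)) • softmaxFn A x
        - (dotp (softmaxFn A x) ((fun k => A k i) * fun k => A k j)) • softmaxFn A x
        - (dotp (softmaxFn A x) (fun k => A k i)) • (softmaxFn A x * fun k => A k j)
        - (dotp (softmaxFn A x) (fun k => A k j)) • (softmaxFn A x * fun k => A k i)
        + (fun k => A k i) * softmaxFn A x * fun k => A k j := by
  rcases Nat.eq_zero_or_pos n with hn | hn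
  · funext k; exact absurd k.isLt (by omega)
  have hne : Nonempty (Fin n) := ⟨⟨0, hn⟩⟩
  have hpos : ∀ y : Fin d → ℝ, 0 < ∑ k, Real.exp (A.mulVec y k) := fun y =>
    Finset.sum_pos (fun k _ => Real.exp_pos _) Finset.univ_nonempty
  have hfun : (fun y => fderiv ℝ (softmaxFn A) y (Pi.single j 1)) =
      fun y => (softmaxFn A y * fun k => A k j) -
        (dotp (softmaxFn A y) (fun k => A k j)) • softmaxFn A y := by
    funext y
    rw [(smF_hasFDerivAt A y (hpos y)).fderiv, smPhi_single]
  rw [hfun]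
  set a : Fin n → ℝ := fun k => A k j with ha
  set p : Fin n → ℝ := softmaxFn A x with hp
  have hcomp : (fun y => (softmaxFn A y * a) -
      (dotp (softmaxFn A y) a) • softmaxFn A y) =
      (fun u : Fin n → ℝ => mulCLM a u - dotCLM a u • u) ∘ softmaxFn A := by
    funext y; simp [Function.comp, mulCLM_apply, dotCLM_apply]
  have hH : HasFDerivAt (fun u : Fin n → ℝ => mulCLM a u - dotCLM a u • u)
      (mulCLM a - (dotCLM a p • ContinuousLinearMap.id ℝ (Fin n → ℝ) +
        (dotCLM a).smulRight p)) p :=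
    ((mulCLM a).hasFDerivAt).sub (((dotCLM a).hasFDerivAt).smul (hasFDerivAt_id p))
  have hG : HasFDerivAt (fun y => (softmaxFn A y * a) -
      (dotp (softmaxFn A y) a) • softmaxFn A y)
      ((mulCLM a - (dotCLM a p • ContinuousLinearMap.id ℝ (Fin n → ℝ) +
        (dotCLM a).smulRight p)).comp (smΦ A x)) x := by
    rw [hcomp]
    exact hH.comp x (smF_hasFDerivAt A x (hpos x))
  rw [hG.fderiv, ContinuousLinearMap.comp_apply, smPhi_single]
  set w : Fin n → ℝ := (softmaxFn A x * fun k => A k i) -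
    (dotp (softmaxFn A x) (fun k => A k i)) • softmaxFn A x with hw
  have hdw : dotp w a = dotp p ((fun k => A k i) * fun k => A k j) -
      dotp p (fun k => A k i) * dotp p a := by
    simp only [dotp, hw, ha, hp, Pi.sub_apply, Pi.mul_apply, Pi.smul_apply,
      smul_eq_mul, sub_mul, Finset.sum_sub_distrib, Finset.mul_sum]
    refine congrArg₂ (· - ·) ?_ ?_ <;>
      exact Finset.sum_congr rfl fun l _ => by ring
  funext k
  simp only [ContinuousLinearMap.sub_apply, ContinuousLinearMap.add_apply,
    ContinuousLinearMap.smul_apply, ContinuousLinearMap.coe_id', id,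
    ContinuousLinearMap.smulRight_apply, mulCLM_apply, dotCLM_apply, hdw,
    Pi.sub_apply, Pi.mul_apply, Pi.smul_apply, Pi.add_apply, smul_eq_mul]
  simp only [hw, Pi.sub_apply, Pi.mul_apply, Pi.smul_apply, smul_eq_mul]
  ring
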